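/- For any constants c₁, c₂ ∈ ℝ, the functions Ω(τ) = (1 + e^{3τ + 2c₁})^{−1/2} and z(τ) = c₂·e^{τ}/(1 + e^{3τ + 2c₁}) are differentiable on ℝ and satisfy, for every τ ∈ ℝ, the averaged perturbation system Ω'(τ) = (3/2)·Ω(τ)·(Ω(τ)² − 1) and z'(τ) = (3·Ω(τ)² − 2)·z(τ). -/

import Mathlib

/-- The functions `Ω(τ) = (1 + e^{3τ+2c₁})^{-1/2}` and
`z(τ) = c₂ e^τ / (1 + e^{3τ+2c₁})` solve the averaged perturbation system
`Ω' = (3/2) Ω (Ω² - 1)`, `z' = (3Ω² - 2) z` on all of `ℝ`. -/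
theorem averaged_perturbation_solutions (c₁ c₂ : ℝ) :
    ∀ τ : ℝ,
      HasDerivAt (fun τ => 1 / Real.sqrt (1 + Real.exp (3 * τ + 2 * c₁)))
        (3 / 2 * (1 / Real.sqrt (1 + Real.exp (3 * τ + 2 * c₁))) *
          ((1 / Real.sqrt (1 + Real.exp (3 * τ + 2 * c₁))) ^ 2 - 1)) τ ∧
      HasDerivAt (fun τ => c₂ * Real.exp τ / (1 + Real.exp (3 * τ + 2 * c₁)))
        ((3 * (1 / Real.sqrt (1 + Real.exp (3 * τ + 2 * c₁))) ^ 2 - 2) *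
          (c₂ * Real.exp τ / (1 + Real.exp (3 * τ + 2 * c₁)))) τ := by
  intro τ
  set E := Real.exp (3 * τ + 2 * c₁) with hE
  have hEpos : 0 < E := Real.exp_pos _
  have hupos : 0 < 1 + E := by linarith
  have hune : (1 : ℝ) + E ≠ 0 := ne_of_gt hupos
  have hspos : 0 < Real.sqrt (1 + E) := Real.sqrt_pos.mpr hupos
  have hsne : Real.sqrt (1 + E) ≠ 0 := ne_of_gt hspos
  have hsq : Real.sqrt (1 + E) ^ 2 = 1 + E := Real.sq_sqrt hupos.le
  -- derivative of u = 1 + exp(3τ + 2c₁)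
  have hu : HasDerivAt (fun t : ℝ => 1 + Real.exp (3 * t + 2 * c₁)) (3 * E) τ := by
    have h1 : HasDerivAt (fun t : ℝ => 3 * t + 2 * c₁) 3 τ := by
      simpa using ((hasDerivAt_id τ).const_mul 3).add_const (2 * c₁)
    simpa [hE, mul_comm] using (((h1.exp)).const_add 1)
  constructor
  · have hs : HasDerivAt (fun t : ℝ => Real.sqrt (1 + Real.exp (3 * t + 2 * c₁)))
        (3 * E / (2 * Real.sqrt (1 + E))) τ := hu.sqrt hune
    have hi := hs.inv hsne
    have : HasDerivAt (fun t : ℝ => (Real.sqrt (1 + Real.exp (3 * t + 2 * c₁)))⁻¹)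
        (3 / 2 * (1 / Real.sqrt (1 + E)) * ((1 / Real.sqrt (1 + E)) ^ 2 - 1)) τ := by
      convert hi using 1
      case e'_4 | e'_5 | e'_8 => rfl
      rw [div_pow, one_pow, hsq]
      field_simp
      ring
    simpa [one_div] using this
  · have hnum : HasDerivAt (fun t : ℝ => c₂ * Real.exp t) (c₂ * Real.exp τ) τ :=
      (Real.hasDerivAt_exp τ).const_mul c₂
    have hz := hnum.div hu hune
    convert hz using 1
    case e'_4 | e'_5 | e'_8 => rfl
    rw [div_pow, one_pow, hsq]
    field_simp
    ring
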